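/- Let G be a locally compact second countable group equipped with a Haar measure, let X be a complete separable metric space, and let f : G → X be a measurable map. Assume that for every ε > 0 and every g ∈ G there is a neighbourhood U of g such that the essential supremum, over (h, h') ∈ U × U with respect to the product of the Haar measure with itself, of d(f(h), f(h')) is strictly less than ε. Then f agrees almost everywhere with a continuous function G → X. -/

import Mathlib

open MeasureTheory Filter

/-- Monod, Lemma: a measurable map from a locally compact second countable group (with Haar
measure) to a complete separable metric space which is locally essentially almost constant up
to `ε` (its essential oscillation on some neighbourhood of each point is `< ε`, for the
product of the Haar measure with itself) agrees almost everywhere with a continuous map. -/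
theorem ae_eq_continuous_of_small_essential_oscillation
    {G : Type*} [Group G] [TopologicalSpace G] [IsTopologicalGroup G]
    [LocallyCompactSpace G] [SecondCountableTopology G]
    [MeasurableSpace G] [BorelSpace G]
    (μ : Measure G) [μ.IsHaarMeasure]
    {X : Type*} [MetricSpace X] [CompleteSpace X] [TopologicalSpace.SeparableSpace X]
    [MeasurableSpace X] [BorelSpace X]
    (f : G → X) (hf : Measurable f)
    (hosc : ∀ ε : ℝ, 0 < ε → ∀ g : G, ∃ U ∈ nhds g, ∃ c : ℝ, c < ε ∧
      ∀ᵐ p ∂((μ.restrict U).prod (μ.restrict U)), dist (f p.1) (f p.2) ≤ c) :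
    ∃ g : G → X, Continuous g ∧ f =ᵐ[μ] g := by
  -- Step 1: for every ε > 0 and x, there is an open neighbourhood V of x and a value y
  -- such that a.e. on V, f is within ε of y.
  have key : ∀ ε : ℝ, 0 < ε → ∀ x : G, ∃ V : Set G, IsOpen V ∧ x ∈ V ∧ ∃ y : X,
      ∀ᵐ h ∂μ, h ∈ V → dist (f h) y ≤ ε := by
    intro ε hε x
    obtain ⟨U, hU, c, hcε, hae⟩ := hosc ε hε x
    obtain ⟨V, hVU, hVopen, hxV⟩ := mem_nhds_iff.mp hU
    have hVm : MeasurableSet V := hVopen.measurableSet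
    have hle : μ.restrict V ≤ μ.restrict U := Measure.restrict_mono hVU le_rfl
    have hac : (μ.restrict V).prod (μ.restrict V) ≪ (μ.restrict U).prod (μ.restrict U) :=
      (Measure.absolutelyContinuous_of_le hle).prod (Measure.absolutelyContinuous_of_le hle)
    have haeV : ∀ᵐ p ∂((μ.restrict V).prod (μ.restrict V)), dist (f p.1) (f p.2) ≤ c :=
      hac.ae_le hae
    have h2 := Measure.ae_ae_of_ae_prod haeV
    have hpos : μ.restrict V ≠ 0 := by
      rw [Ne, Measure.restrict_eq_zero]
      exact (hVopen.measure_pos μ ⟨x, hxV⟩).ne'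
    have : (ae (μ.restrict V)).NeBot := ae_neBot.2 hpos
    obtain ⟨h0, hh0⟩ := h2.exists
    refine ⟨V, hVopen, hxV, f h0, ?_⟩
    have h3 : ∀ᵐ h' ∂μ.restrict V, dist (f h') (f h0) ≤ ε :=
      hh0.mono fun h' hh' => (dist_comm (f h0) (f h') ▸ hh').trans hcε.le
    exact (ae_restrict_iff' hVm).1 h3
  have hεpos : ∀ n : ℕ, (0 : ℝ) < 1 / (n + 1) := fun n => by positivity
  choose V hVopen hmem y hy using fun (n : ℕ) (x : G) => key (1 / (n + 1)) (hεpos n) x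
  -- Step 2: comparison of values on overlapping neighbourhoods
  have hdist : ∀ n m (x x' : G), x' ∈ V n x →
      dist (y n x) (y m x') ≤ 1 / (n + 1) + 1 / (m + 1) := by
    intro n m x x' hx'
    set W := V n x ∩ V m x' with hWdef
    have hW : IsOpen W := (hVopen n x).inter (hVopen m x')
    have hWne : W.Nonempty := ⟨x', hx', hmem m x'⟩
    have hpos : μ.restrict W ≠ 0 := by
      rw [Ne, Measure.restrict_eq_zero]
      exact (hW.measure_pos μ hWne).ne'
    have : (ae (μ.restrict W)).NeBot := ae_neBot.2 hpos
    have h1 : ∀ᵐ h ∂μ.restrict W, h ∈ V n x → dist (f h) (y n x) ≤ 1 / (n + 1) :=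
      ae_restrict_of_ae (hy n x)
    have h2 : ∀ᵐ h ∂μ.restrict W, h ∈ V m x' → dist (f h) (y m x') ≤ 1 / (m + 1) :=
      ae_restrict_of_ae (hy m x')
    have h3 : ∀ᵐ h ∂μ.restrict W, h ∈ W := ae_restrict_mem hW.measurableSet
    obtain ⟨h, hhW, hh1, hh2⟩ := (h3.and (h1.and h2)).exists
    calc dist (y n x) (y m x') ≤ dist (y n x) (f h) + dist (f h) (y m x') := dist_triangle _ _ _
      _ ≤ 1 / (n + 1) + 1 / (m + 1) :=
        add_le_add (dist_comm (f h) (y n x) ▸ hh1 hhW.1) (hh2 hhW.2)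
  -- Step 3: the sequence (y n x) is Cauchy; define g as its limit
  have htend0 : Tendsto (fun n : ℕ => 1 / ((n : ℝ) + 1)) atTop (nhds 0) :=
    tendsto_one_div_add_atTop_nhds_zero_nat
  have hcauchy : ∀ x : G, CauchySeq fun n => y n x := by
    intro x
    refine cauchySeq_of_le_tendsto_0 (fun N => 2 / (N + 1)) ?_ ?_
    · intro p q N hp hq
      have h1 : (1 : ℝ) / (p + 1) ≤ 1 / (N + 1) := by
        apply one_div_le_one_div_of_le (by positivity)
        have : (N : ℝ) ≤ p := Nat.cast_le.2 hp
        linarith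
      have h2 : (1 : ℝ) / (q + 1) ≤ 1 / (N + 1) := by
        apply one_div_le_one_div_of_le (by positivity)
        have : (N : ℝ) ≤ q := Nat.cast_le.2 hq
        linarith
      have := hdist p q x x (hmem p x)
      calc dist (y p x) (y q x) ≤ 1 / (p + 1) + 1 / (q + 1) := this
        _ ≤ 1 / (N + 1) + 1 / (N + 1) := add_le_add h1 h2
        _ = 2 / (N + 1) := by ring
    · have : Tendsto (fun N : ℕ => 2 * (1 / ((N : ℝ) + 1))) atTop (nhds (2 * 0)) :=
        htend0.const_mul 2
      simpa [mul_one_div, div_eq_mul_inv] using this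
  have hconv : ∀ x : G, ∃ z : X, Tendsto (fun n => y n x) atTop (nhds z) :=
    fun x => cauchySeq_tendsto_of_complete (hcauchy x)
  choose g hg using hconv
  -- Step 4: key estimate on g
  have hgy : ∀ n (x x' : G), x' ∈ V n x → dist (g x') (y n x) ≤ 1 / (n + 1) := by
    intro n x x' hx'
    have h1 : Tendsto (fun m => dist (y m x') (y n x)) atTop (nhds (dist (g x') (y n x))) :=
      (hg x').dist tendsto_const_nhds
    have h2 : Tendsto (fun m : ℕ => 1 / ((n : ℝ) + 1) + 1 / (m + 1)) atTop
        (nhds (1 / ((n : ℝ) + 1) + 0)) := tendsto_const_nhds.add htend0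
    rw [add_zero] at h2
    refine le_of_tendsto_of_tendsto h1 h2 (Eventually.of_forall fun m => ?_)
    show dist (y m x') (y n x) ≤ 1 / (n + 1) + 1 / (m + 1)
    rw [dist_comm]
    exact hdist n m x x' hx'
  -- Step 5: continuity of g
  have hcont : Continuous g := by
    rw [Metric.continuous_iff']
    intro x ε hε
    obtain ⟨n, hn⟩ : ∃ n : ℕ, 2 / ((n : ℝ) + 1) < ε := by
      have : Tendsto (fun N : ℕ => 2 * (1 / ((N : ℝ) + 1))) atTop (nhds (2 * 0)) :=
        htend0.const_mul 2
      rw [mul_zero] at this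
      have := (this.eventually (eventually_lt_nhds hε)).exists
      simpa [mul_one_div, div_eq_mul_inv] using this
    have hV : V n x ∈ nhds x := (hVopen n x).mem_nhds (hmem n x)
    filter_upwards [hV] with x' hx'
    calc dist (g x') (g x) ≤ dist (g x') (y n x) + dist (y n x) (g x) := dist_triangle _ _ _
      _ ≤ 1 / (n + 1) + 1 / (n + 1) :=
        add_le_add (hgy n x x' hx') (dist_comm (g x) (y n x) ▸ hgy n x x (hmem n x))
      _ = 2 / (n + 1) := by ring
      _ < ε := hn
  -- Step 6: a.e. equality, via countable subcovers
  have hcover : ∀ n : ℕ, ∃ t : Set G, t.Countable ∧ ⋃ x ∈ t, V n x = ⋃ x, V n x :=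
    fun n => TopologicalSpace.isOpen_iUnion_countable (V n) (hVopen n)
  choose t htc htU using hcover
  have huniv : ∀ n : ℕ, ∀ h : G, ∃ x ∈ t n, h ∈ V n x := by
    intro n h
    have : h ∈ ⋃ x ∈ t n, V n x := by
      rw [htU n]
      exact Set.mem_iUnion.2 ⟨h, hmem n h⟩
    simpa using this
  have hae : ∀ᵐ h ∂μ, ∀ n : ℕ, ∀ x ∈ t n, h ∈ V n x → dist (f h) (y n x) ≤ 1 / (n + 1) := by
    rw [ae_all_iff]
    intro n
    rw [ae_ball_iff (htc n)]
    intro x _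
    exact hy n x
  refine ⟨g, hcont, hae.mono fun h hh => ?_⟩
  have hle : ∀ n : ℕ, dist (f h) (g h) ≤ 2 / (n + 1) := by
    intro n
    obtain ⟨x, hx, hhx⟩ := huniv n h
    calc dist (f h) (g h) ≤ dist (f h) (y n x) + dist (y n x) (g h) := dist_triangle _ _ _
      _ ≤ 1 / (n + 1) + 1 / (n + 1) :=
        add_le_add (hh n x hx hhx) (dist_comm (g h) (y n x) ▸ hgy n x h hhx)
      _ = 2 / (n + 1) := by ring
  have h0 : dist (f h) (g h) ≤ 0 := by
    have : Tendsto (fun N : ℕ => 2 * (1 / ((N : ℝ) + 1))) atTop (nhds (2 * 0)) :=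
      htend0.const_mul 2
    rw [mul_zero] at this
    refine ge_of_tendsto' this fun n => ?_
    simpa [mul_one_div, div_eq_mul_inv] using hle n
  exact dist_le_zero.mp h0
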